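/- arXiv:math-ph/0508029 — 3 statements merged into one kernel-verified Lean document; each statement's English description precedes it below -/
import Mathlib

section
/- For every real number z with z < a or z > b, z is an eigenvalue of the operator h if and only if μ ∫_Q φ(t)² / (w(t) − z) dt = 1. -/
open MeasureTheory Real Filter Topology

noncomputable section

/-- Euclidean three-dimensional space. -/
abbrev E3 : Type := EuclideanSpace ℝ (Fin 3)

/-- The cube `Q = (-π, π]³` representing the torus `𝕋³`. -/
def Q3 : Set E3 := {p : E3 | ∀ i, p i ∈ Set.Ioc (-π) π}

/-- The `i`-th standard basis vector of `ℝ³`. -/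
def eV (i : Fin 3) : E3 := EuclideanSpace.single i (1 : ℝ)

/-- Lebesgue measure restricted to `Q`. -/
def μQ : Measure E3 := volume.restrict Q3

/-- The product measure on `Q × Q`. -/
def μQQ : Measure (E3 × E3) := μQ.prod μQ

abbrev Lc : Type := Lp ℂ 2 μQ

abbrev LQQ : Type := Lp ℂ 2 μQQ

set_option maxHeartbeats 1000000 in
/-- For `z` outside `[min_Q w, max_Q w]`, `z` is an eigenvalue of the Friedrichs model `h`
iff `μ ∫_Q φ(t)²/(w(t) - z) dt = 1`. -/
theorem friedrichs_eigenvalue_iff_fredholm_determinant_zero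
    (w : E3 → ℝ) (φ : E3 → ℝ) (μ : ℝ)
    (hw_cont : Continuous w)
    (hw_per : ∀ (p : E3) (i : Fin 3), w (p + (2 * π) • eV i) = w p)
    (hφ_per : ∀ (p : E3) (i : Fin 3), φ (p + (2 * π) • eV i) = φ p)
    (hφL2 : MemLp φ 2 μQ)
    (hμpos : 0 < μ)
    (h : Lc →L[ℂ] Lc) (hsa : IsSelfAdjoint h)
    (hh : ∀ f : Lc, (h f : E3 → ℂ) =ᵐ[μQ] fun q =>
      (w q : ℂ) * f q - (μ : ℂ) * (φ q : ℂ) * ∫ t in Q3, (φ t : ℂ) * f t)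
    (z : ℝ) (hz : z < sInf (w '' Q3) ∨ sSup (w '' Q3) < z) :
    (∃ f : Lc, f ≠ 0 ∧ h f = (z : ℂ) • f) ↔ μ * ∫ t in Q3, φ t ^ 2 / (w t - z) = 1 := by
  have hπ : (0:ℝ) < π := Real.pi_pos
  -- measurability of Q3
  have hQmeas : MeasurableSet Q3 := by
    have hEq : Q3 = ⋂ i, (fun p : E3 => EuclideanSpace.proj (𝕜 := ℝ) i p) ⁻¹' Set.Ioc (-π) π := by
      ext p
      simp only [Q3, Set.mem_setOf_eq, Set.mem_iInter, Set.mem_preimage]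
      rfl
    rw [hEq]
    exact MeasurableSet.iInter fun i =>
      (EuclideanSpace.proj (𝕜 := ℝ) i).continuous.measurable measurableSet_Ioc
  have hQae : ∀ᵐ t ∂μQ, t ∈ Q3 := ae_restrict_mem hQmeas
  -- lower bound for the denominator
  obtain ⟨δ, hδpos, hδ⟩ : ∃ δ : ℝ, 0 < δ ∧ ∀ t ∈ Q3, δ ≤ |w t - z| := by
    have hsub : Q3 ⊆ Metric.closedBall (0:E3) (4*π) := by
      intro p hp
      rw [Metric.mem_closedBall, dist_zero_right]
      rw [EuclideanSpace.norm_eq p]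
      have hle : (∑ i, ‖p i‖ ^ 2) ≤ (4*π)^2 := by
        have hterm : ∀ i : Fin 3, ‖p i‖ ^ 2 ≤ π ^ 2 := by
          intro i
          have h1 := (hp i).1
          have h2 := (hp i).2
          have habs : |p i| ≤ π := abs_le.2 ⟨le_of_lt h1, h2⟩
          rw [Real.norm_eq_abs]
          nlinarith [abs_nonneg (p i)]
        calc (∑ i, ‖p i‖ ^ 2) ≤ ∑ _i : Fin 3, π^2 :=
              Finset.sum_le_sum fun i _ => hterm i
          _ = 3 * π^2 := by simp
          _ ≤ (4*π)^2 := by nlinarith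
      calc Real.sqrt (∑ i, ‖p i‖^2) ≤ Real.sqrt ((4*π)^2) := Real.sqrt_le_sqrt hle
        _ = 4*π := Real.sqrt_sq (by positivity)
    have hcpt : IsCompact (w '' Metric.closedBall (0:E3) (4*π)) :=
      (isCompact_closedBall _ _).image hw_cont
    have himg : w '' Q3 ⊆ w '' Metric.closedBall (0:E3) (4*π) := Set.image_mono hsub
    have hbddB : BddBelow (w '' Q3) := BddBelow.mono himg hcpt.bddBelow
    have hbddA : BddAbove (w '' Q3) := BddAbove.mono himg hcpt.bddAbove
    rcases hz with hz | hz
    · refine ⟨sInf (w '' Q3) - z, by linarith, fun t ht => ?_⟩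
      have hle : sInf (w '' Q3) ≤ w t := csInf_le hbddB ⟨t, ht, rfl⟩
      have h1 : sInf (w '' Q3) - z ≤ w t - z := by linarith
      exact h1.trans (le_abs_self _)
    · refine ⟨z - sSup (w '' Q3), by linarith, fun t ht => ?_⟩
      have hle : w t ≤ sSup (w '' Q3) := le_csSup hbddA ⟨t, ht, rfl⟩
      calc z - sSup (w '' Q3) ≤ z - w t := by linarith
        _ ≤ |z - w t| := le_abs_self _
        _ = |w t - z| := abs_sub_comm _ _
  have hne : ∀ t ∈ Q3, w t - z ≠ 0 := by
    intro t ht h0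
    have := hδ t ht
    rw [h0, abs_zero] at this
    linarith
  have hneℂ : ∀ t ∈ Q3, ((w t : ℂ) - (z:ℂ)) ≠ 0 := by
    intro t ht
    have hcast : ((w t : ℂ) - (z:ℂ)) = ((w t - z : ℝ) : ℂ) := by push_cast; ring
    rw [hcast]
    exact_mod_cast hne t ht
  -- the candidate eigenfunction
  set g : E3 → ℂ := fun t => (φ t : ℂ) / ((w t : ℂ) - (z:ℂ)) with hgdef
  have hφℂ : MemLp (fun t => (φ t : ℂ)) 2 μQ := hφL2.ofReal
  have hgm : AEStronglyMeasurable g μQ := by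
    have hden : Measurable fun t : E3 => ((w t : ℂ) - (z:ℂ))⁻¹ :=
      ((Complex.measurable_ofReal.comp hw_cont.measurable).sub measurable_const).inv
    simp only [hgdef, div_eq_mul_inv]
    exact hφℂ.aestronglyMeasurable.mul hden.aestronglyMeasurable
  have hg : MemLp g 2 μQ := by
    refine hφℂ.of_le_mul (c := δ⁻¹) hgm ?_
    filter_upwards [hQae] with t ht
    have hcast : ((w t : ℂ) - (z:ℂ)) = ((w t - z : ℝ) : ℂ) := by push_cast; ring
    simp only [hgdef, norm_div, hcast, Complex.norm_real, Real.norm_eq_abs]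
    have h1 : |φ t| / |w t - z| ≤ |φ t| / δ :=
      div_le_div_of_nonneg_left (abs_nonneg _) hδpos (hδ t ht)
    simpa [div_eq_inv_mul] using h1
  -- identification of the complex integral with the real one
  have hIC : (∫ t in Q3, (φ t : ℂ) * g t) = (((∫ t in Q3, φ t ^ 2 / (w t - z)) : ℝ) : ℂ) := by
    rw [show (((∫ t in Q3, φ t ^ 2 / (w t - z)) : ℝ) : ℂ)
        = ∫ t in Q3, ((φ t ^ 2 / (w t - z) : ℝ) : ℂ) from integral_ofReal.symm]
    refine integral_congr_ae (Eventually.of_forall fun t => ?_)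
    simp only [hgdef]
    push_cast
    ring
  constructor
  · -- eigenvalue implies determinant condition
    rintro ⟨f, hf0, hfz⟩
    set c : ℂ := ∫ t in Q3, (φ t : ℂ) * f t with hc
    have h1 : ∀ᵐ q ∂μQ, ((w q : ℂ) - (z:ℂ)) * f q = (μ:ℂ) * c * (φ q : ℂ) := by
      have h2 := hh f
      rw [hfz] at h2
      rw [← hc] at h2
      filter_upwards [h2, Lp.coeFn_smul (z:ℂ) f] with q hq2 hqs
      rw [hqs] at hq2
      simp only [Pi.smul_apply, smul_eq_mul] at hq2
      linear_combination -hq2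
    by_cases hc0 : c = 0
    · exfalso
      apply hf0
      refine Lp.eq_zero_iff_ae_eq_zero.mpr ?_
      filter_upwards [h1, hQae] with q hq hqQ
      have hwz := hneℂ q hqQ
      have hz0 : ((w q : ℂ) - (z:ℂ)) * f q = 0 := by rw [hq, hc0]; ring
      have := (mul_eq_zero.1 hz0).resolve_left hwz
      simpa using this
    · have hfg : ∀ᵐ q ∂μQ, (f : E3 → ℂ) q = (μ:ℂ) * c * g q := by
        filter_upwards [h1, hQae] with q hq hqQ
        have hwz := hneℂ q hqQ
        simp only [hgdef]
        rw [← mul_div_assoc, eq_div_iff hwz]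
        linear_combination hq
      have hcI : c = (μ:ℂ) * c * (∫ t in Q3, (φ t : ℂ) * g t) := by
        calc c = ∫ t in Q3, (μ:ℂ) * c * ((φ t : ℂ) * g t) := by
              rw [hc]
              refine integral_congr_ae ?_
              filter_upwards [hfg] with q hq
              rw [hq]
              ring
          _ = (μ:ℂ) * c * (∫ t in Q3, (φ t : ℂ) * g t) := by
              rw [integral_const_mul]
      have hμI : (μ:ℂ) * (((∫ t in Q3, φ t ^ 2 / (w t - z)) : ℝ) : ℂ) = 1 := by
        rw [← hIC]
        have hcc : c * 1 = c * ((μ:ℂ) * (∫ t in Q3, (φ t : ℂ) * g t)) := by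
          linear_combination hcI
        exact (mul_left_cancel₀ hc0 hcc).symm
      exact_mod_cast hμI
  · -- determinant condition implies eigenvalue
    intro hI
    have hμI : (μ:ℂ) * (∫ t in Q3, (φ t : ℂ) * g t) = 1 := by
      rw [hIC]
      exact_mod_cast hI
    refine ⟨hg.toLp g, ?_, ?_⟩
    · intro h0
      have hg0 : g =ᵐ[μQ] 0 :=
        hg.coeFn_toLp.symm.trans (Lp.eq_zero_iff_ae_eq_zero.mp h0)
      have hzero : (∫ t in Q3, (φ t : ℂ) * g t) = 0 := by
        refine integral_eq_zero_of_ae ?_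
        filter_upwards [hg0] with q hq
        simp only [Pi.zero_apply] at hq
        simp [hq]
      rw [hzero, mul_zero] at hμI
      exact zero_ne_one hμI
    · apply Lp.ext
      have hcoe := hg.coeFn_toLp
      have hint : (∫ t in Q3, (φ t : ℂ) * (hg.toLp g : Lc) t) = ∫ t in Q3, (φ t : ℂ) * g t := by
        refine integral_congr_ae ?_
        filter_upwards [hcoe] with q hq
        rw [hq]
      filter_upwards [hh (hg.toLp g), hcoe, Lp.coeFn_smul (z:ℂ) (hg.toLp g), hQae]
        with q hq2 hqc hqs hqQ
      rw [hq2, hqs]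
      simp only [Pi.smul_apply, smul_eq_mul, hqc, hint]
      have hd := hneℂ q hqQ
      have hstep : (μ:ℂ) * (φ q : ℂ) * (∫ t in Q3, (φ t : ℂ) * g t) = (φ q : ℂ) := by
        calc (μ:ℂ) * (φ q : ℂ) * (∫ t in Q3, (φ t : ℂ) * g t)
            = (φ q : ℂ) * ((μ:ℂ) * (∫ t in Q3, (φ t : ℂ) * g t)) := by ring
          _ = (φ q : ℂ) := by rw [hμI, mul_one]
      rw [hstep]
      simp only [hgdef]
      field_simp
      ring
end
end

section
/- Assume Hypotheses 1, 2 and 3 and let μ_α = μ_α⁰ for α = 1, 2. Then for every α ∈ {1,2}, every p ∈ Q and every real z < m, z is not an eigenvalue of the Friedrichs model h_{μ_α⁰}(p). -/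
open MeasureTheory Real Filter Topology

noncomputable section

/-- `Λ₁(p, z) = ∫_Q φ(t)² / (u(t,p) - z) dt`. -/
def Lam1 (u : E3 × E3 → ℝ) (φ : E3 → ℝ) (p : E3) (z : ℝ) : ℝ :=
  ∫ t in Q3, φ t ^ 2 / (u (t, p) - z)

/-- `Λ₂(p, z) = ∫_Q φ(t)² / (u(p,t) - z) dt`. -/
def Lam2 (u : E3 × E3 → ℝ) (φ : E3 → ℝ) (p : E3) (z : ℝ) : ℝ :=
  ∫ t in Q3, φ t ^ 2 / (u (p, t) - z)

namespace FriedrichsNoEV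

def K3 : Set E3 := {p : E3 | ∀ i, p i ∈ Set.Icc (-π) π}

lemma Q3_measurable : MeasurableSet Q3 := by
  have h : Q3 = ⋂ i : Fin 3, (fun p : E3 => p i) ⁻¹' Set.Ioc (-π) π := by
    ext p; simp [Q3]
  rw [h]
  exact MeasurableSet.iInter fun i =>
    measurableSet_Ioc.preimage (EuclideanSpace.proj (𝕜 := ℝ) i).continuous.measurable

lemma Q3_subset_K3 : Q3 ⊆ K3 := fun p hp i => ⟨(hp i).1.le, (hp i).2⟩

lemma zero_mem_Q3 : (0 : E3) ∈ Q3 := by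
  intro i
  have h : (0 : E3) i = 0 := rfl
  rw [h]
  exact ⟨neg_lt_zero.mpr pi_pos, pi_pos.le⟩

lemma zero_mem_K3 : (0 : E3) ∈ K3 := Q3_subset_K3 zero_mem_Q3

lemma K3_compact : IsCompact K3 := by
  have hcl : IsClosed K3 := by
    have h : K3 = ⋂ i : Fin 3, (fun p : E3 => p i) ⁻¹' Set.Icc (-π) π := by
      ext p; simp [K3]
    rw [h]
    exact isClosed_iInter fun i =>
      isClosed_Icc.preimage (EuclideanSpace.proj (𝕜 := ℝ) i).continuous
  have hbd : Bornology.IsBounded K3 := by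
    rw [Metric.isBounded_iff_subset_closedBall 0]
    refine ⟨Real.sqrt (3 * π ^ 2), fun p hp => ?_⟩
    rw [Metric.mem_closedBall, dist_zero_right, EuclideanSpace.norm_eq]
    apply Real.sqrt_le_sqrt
    have hb : ∀ i : Fin 3, ‖p i‖ ^ 2 ≤ π ^ 2 := by
      intro i
      have h1 := (hp i).1; have h2 := (hp i).2
      rw [Real.norm_eq_abs, sq_abs]
      nlinarith [pi_pos]
    calc ∑ i : Fin 3, ‖p i‖ ^ 2 ≤ ∑ _i : Fin 3, π ^ 2 := Finset.sum_le_sum fun i _ => hb i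
      _ = 3 * π ^ 2 := by norm_num [Finset.sum_const, Finset.card_univ]
  exact Metric.isCompact_of_isClosed_isBounded hcl hbd

instance : IsFiniteMeasure μQ := by
  constructor
  rw [show μQ = volume.restrict Q3 from rfl, Measure.restrict_apply_univ]
  exact lt_of_le_of_lt (measure_mono Q3_subset_K3) K3_compact.measure_lt_top

lemma ae_mem_Q3 : ∀ᵐ t ∂μQ, t ∈ Q3 := ae_restrict_mem Q3_measurable

lemma ae_ne_zero : ∀ᵐ t ∂μQ, t ≠ (0 : E3) := by
  rw [ae_iff]
  have h : {t : E3 | ¬ t ≠ 0} = {0} := by ext t; simp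
  rw [h]
  have h2 : μQ {(0 : E3)} = volume ({(0 : E3)} ∩ Q3) :=
    Measure.restrict_apply (measurableSet_singleton 0)
  rw [h2]
  exact le_antisymm (le_trans (measure_mono Set.inter_subset_left)
    (le_of_eq (measure_singleton 0))) zero_le

lemma sum_apply' (S : Finset (Fin 3)) (v : Fin 3 → E3) (i : Fin 3) :
    (∑ j ∈ S, v j) i = ∑ j ∈ S, v j i := by
  induction S using Finset.induction_on with
  | empty => rfl
  | insert _ _ hj ih => rw [Finset.sum_insert ‹_›, Finset.sum_insert ‹_›, ← ih]; rfl

lemma per_shift (w : E3 × E3 → ℝ)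
    (hper : ∀ (x p : E3) (i : Fin 3), w (x + (2 * π) • eV i, p) = w (x, p))
    (p : E3) (S : Finset (Fin 3)) :
    ∀ x : E3, w (x + ∑ j ∈ S, (2 * π) • eV j, p) = w (x, p) := by
  induction S using Finset.induction_on with
  | empty => intro x; simp
  | insert _ _ hj ih =>
      intro x
      rw [Finset.sum_insert ‹_›, ← add_assoc, ih (x + (2 * π) • eV _), hper]

lemma exists_rep (t : E3) (ht : t ∈ K3) :
    ∃ t' ∈ Q3, ∃ S : Finset (Fin 3), t' = t + ∑ j ∈ S, (2 * π) • eV j := by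
  classical
  set S : Finset (Fin 3) := Finset.univ.filter (fun i => t i = -π) with hS
  refine ⟨t + ∑ j ∈ S, (2 * π) • eV j, ?_, S, rfl⟩
  intro i
  have happ : (t + ∑ j ∈ S, (2 * π) • eV j) i = t i + ∑ j ∈ S, ((2 * π) • eV j) i := by
    rw [show (t + ∑ j ∈ S, (2 * π) • eV j) i = t i + (∑ j ∈ S, (2 * π) • eV j) i from rfl,
      sum_apply']
  have hev : ∀ j, ((2 * π) • eV j) i = if i = j then 2 * π else 0 := by
    intro j
    rw [show ((2 * π) • eV j) i = (2 * π) * eV j i from rfl,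
      show eV j i = (EuclideanSpace.single j (1 : ℝ)) i from rfl,
      EuclideanSpace.single_apply]
    by_cases h : i = j <;> simp [h]
  have hsum : ∑ j ∈ S, ((2 * π) • eV j) i = if i ∈ S then 2 * π else 0 := by
    simp only [hev]
    rw [Finset.sum_ite_eq S i (fun _ => 2 * π)]
  rw [happ, hsum]
  by_cases hiS : i ∈ S
  · have hti : t i = -π := by
      rw [hS] at hiS; simpa using hiS
    rw [if_pos hiS, hti]
    constructor <;> [linarith [pi_pos]; linarith [pi_pos]]
  · have hti : t i ≠ -π := by
      rw [hS] at hiS; simpa using hiS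
    rw [if_neg hiS, add_zero]
    exact ⟨lt_of_le_of_ne (ht i).1 (Ne.symm hti), (ht i).2⟩

lemma gap (w : E3 × E3 → ℝ) (m : ℝ) (hw : Continuous w)
    (hper : ∀ (x p : E3) (i : Fin 3), w (x + (2 * π) • eV i, p) = w (x, p))
    (hmin : ∀ t ∈ Q3, ∀ p ∈ Q3, m ≤ w (t, p))
    (huniq : ∀ t ∈ Q3, ∀ p ∈ Q3, w (t, p) = m → t = 0 ∧ p = 0)
    (p : E3) (hp : p ∈ Q3) (hp0 : p ≠ 0) :
    ∃ ε > 0, ∀ t ∈ Q3, ε ≤ w (t, p) - m := by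
  have hc : ContinuousOn (fun t : E3 => w (t, p)) K3 :=
    (hw.comp (continuous_id.prodMk continuous_const)).continuousOn
  obtain ⟨t₀, ht₀K, hmin₀⟩ := K3_compact.exists_isMinOn ⟨0, zero_mem_K3⟩ hc
  obtain ⟨t₀', ht₀'Q, S, hrep⟩ := exists_rep t₀ ht₀K
  have hval : w (t₀', p) = w (t₀, p) := by rw [hrep]; exact per_shift w hper p S t₀
  have hgt : m < w (t₀', p) :=
    lt_of_le_of_ne (hmin t₀' ht₀'Q p hp)
      (fun he => hp0 (huniq t₀' ht₀'Q p hp he.symm).2)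
  refine ⟨w (t₀, p) - m, by rw [← hval]; linarith, fun t htQ => ?_⟩
  have hle := (isMinOn_iff.mp hmin₀) t (Q3_subset_K3 htQ)
  linarith

lemma int_quot (w : E3 × E3 → ℝ) (hw : Continuous w) (φ : E3 → ℝ) (hφ : Continuous φ)
    (p : E3) (z : ℝ) (ε : ℝ) (hε : 0 < ε) (hden : ∀ t ∈ Q3, ε ≤ w (t, p) - z) :
    Integrable (fun t => φ t ^ 2 / (w (t, p) - z)) μQ := by
  obtain ⟨C, hC⟩ := K3_compact.exists_bound_of_continuousOn hφ.continuousOn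
  have hmeas : AEStronglyMeasurable (fun t => φ t ^ 2 / (w (t, p) - z)) μQ :=
    (((hφ.pow 2).measurable).div
      (((hw.comp (continuous_id.prodMk continuous_const)).sub
        continuous_const).measurable)).aestronglyMeasurable
  refine (integrable_const (C ^ 2 / ε)).mono' hmeas ?_
  filter_upwards [ae_mem_Q3] with t htQ
  have h1 : (0 : ℝ) < w (t, p) - z := lt_of_lt_of_le hε (hden t htQ)
  have h2 : φ t ^ 2 ≤ C ^ 2 := by
    have hCt := hC t (Q3_subset_K3 htQ)
    rw [Real.norm_eq_abs] at hCt
    calc φ t ^ 2 = |φ t| ^ 2 := (sq_abs _).symm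
      _ ≤ C ^ 2 := pow_le_pow_left₀ (abs_nonneg _) hCt 2
  rw [Real.norm_eq_abs, abs_of_nonneg (div_nonneg (sq_nonneg _) h1.le)]
  exact div_le_div₀ (sq_nonneg C) h2 hε (hden t htQ)

lemma key (w : E3 × E3 → ℝ) (φ : E3 → ℝ) (m : ℝ)
    (hw : Continuous w) (hφ : Continuous φ)
    (hper : ∀ (x p : E3) (i : Fin 3), w (x + (2 * π) • eV i, p) = w (x, p))
    (hmin : ∀ t ∈ Q3, ∀ p ∈ Q3, m ≤ w (t, p))
    (huniq : ∀ t ∈ Q3, ∀ p ∈ Q3, w (t, p) = m → t = 0 ∧ p = 0)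
    (hmax : ∀ p ∈ Q3, p ≠ 0 →
      (∫ t in Q3, φ t ^ 2 / (w (t, p) - m)) < ∫ t in Q3, φ t ^ 2 / (w (t, 0) - m))
    (μ : ℝ) (hμpos : 0 < μ) (hμ : μ = (∫ t in Q3, φ t ^ 2 / (w (t, 0) - m))⁻¹) :
    ∀ p ∈ Q3, ∀ h : Lc →L[ℂ] Lc,
      (∀ f : Lc, (h f : E3 → ℂ) =ᵐ[μQ] fun q =>
        (w (q, p) : ℂ) * f q - (μ : ℂ) * (φ q : ℂ) * ∫ t in Q3, (φ t : ℂ) * f t) →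
      ∀ z : ℝ, z < m → ¬ ∃ f : Lc, f ≠ 0 ∧ h f = (z : ℂ) • f := by
  intro p hp h hh z hz
  rintro ⟨f, hf0, hfe⟩
  set Λpz : ℝ := ∫ t in Q3, φ t ^ 2 / (w (t, p) - z) with hΛpz
  set Λ0m : ℝ := ∫ t in Q3, φ t ^ 2 / (w (t, 0) - m) with hΛ0m
  have hΛ0pos : 0 < Λ0m := by
    rw [hμ] at hμpos; exact inv_pos.mp hμpos
  set c : ℂ := ∫ t in Q3, (φ t : ℂ) * f t with hc
  -- the eigenvalue equation a.e.
  have heq : ∀ᵐ q ∂μQ, (w (q, p) : ℂ) * f q - (μ : ℂ) * (φ q : ℂ) * c = (z : ℂ) * f q := by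
    have h1 := hh f
    rw [hfe] at h1
    filter_upwards [(Lp.coeFn_smul ((z : ℂ)) f).symm.trans h1] with q hq
    rw [← hq]
    simp
  have hfrep : ∀ᵐ q ∂μQ, f q = (μ : ℂ) * c * (φ q : ℂ) / ((w (q, p) : ℂ) - (z : ℂ)) := by
    filter_upwards [heq, ae_mem_Q3] with q hq hqQ
    have hd : (0 : ℝ) < w (q, p) - z := by
      have := hmin q hqQ p hp; linarith
    have hd' : ((w (q, p) : ℂ) - (z : ℂ)) ≠ 0 := by
      rw [← Complex.ofReal_sub]
      exact Complex.ofReal_ne_zero.mpr hd.ne'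
    field_simp
    linear_combination hq
  -- integrability of the z-integrand
  have hIz : ∀ p' ∈ Q3, Integrable (fun t => φ t ^ 2 / (w (t, p') - z)) μQ := by
    intro p' hp'
    exact int_quot w hw φ hφ p' z (m - z) (by linarith) fun t htQ => by
      have := hmin t htQ p' hp'; linarith
  by_cases hc0 : c = 0
  · -- then f = 0 a.e., contradiction
    apply hf0
    have hz0 : ⇑f =ᵐ[μQ] 0 := by
      filter_upwards [hfrep] with q hq
      simp [hq, hc0]
    exact (Lp.eq_zero_iff_ae_eq_zero).2 hz0
  · -- compute c = μ c Λ(p,z)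
    have hcc : c = ((μ : ℂ) * c) * ((Λpz : ℝ) : ℂ) := by
      have hae : (fun t => (φ t : ℂ) * f t) =ᵐ[μQ]
          (fun t => ((μ : ℂ) * c) * ((φ t ^ 2 / (w (t, p) - z) : ℝ) : ℂ)) := by
        filter_upwards [hfrep, ae_mem_Q3] with t ht htQ
        have hd : (0 : ℝ) < w (t, p) - z := by
          have := hmin t htQ p hp; linarith
        rw [ht]
        have hd' : ((w (t, p) : ℂ) - (z : ℂ)) ≠ 0 := by
          rw [← Complex.ofReal_sub]
          exact Complex.ofReal_ne_zero.mpr hd.ne'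
        push_cast
        field_simp
      calc c = ∫ t in Q3, (φ t : ℂ) * f t := hc
        _ = ∫ t in Q3, ((μ : ℂ) * c) * ((φ t ^ 2 / (w (t, p) - z) : ℝ) : ℂ) :=
            integral_congr_ae hae
        _ = ((μ : ℂ) * c) * ((Λpz : ℝ) : ℂ) := by
            rw [MeasureTheory.integral_const_mul]; congr 1; exact integral_ofReal
    have h1 : (μ : ℂ) * ((Λpz : ℝ) : ℂ) = 1 := by
      have h2 : c * ((μ : ℂ) * ((Λpz : ℝ) : ℂ)) = c * 1 := by
        rw [mul_one]; linear_combination - hcc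
      exact mul_left_cancel₀ hc0 h2
    have h1' : μ * Λpz = 1 := by exact_mod_cast h1
    have hΛeq : Λpz = Λ0m := by
      have : Λpz = μ⁻¹ := eq_inv_of_mul_eq_one_left (by linarith [h1'] )
      rw [this, hμ, inv_inv]
    -- strict inequality Λpz < Λ0m
    have hlt : Λpz < Λ0m := by
      by_cases hp0 : p = 0
      · -- p = 0
        subst hp0
        have hIm : Integrable (fun t => φ t ^ 2 / (w (t, 0) - m)) μQ := by
          by_contra hni
          exact hΛ0pos.ne' (show Λ0m = 0 from integral_undef hni)
        have hmono : (fun t => φ t ^ 2 / (w (t, 0) - z)) ≤ᵐ[μQ]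
            (fun t => φ t ^ 2 / (w (t, 0) - m)) := by
          filter_upwards [ae_mem_Q3, ae_ne_zero] with t htQ ht0
          have hwm : m < w (t, 0) := by
            rcases (hmin t htQ 0 zero_mem_Q3).lt_or_eq with h' | h'
            · exact h'
            · exact absurd (huniq t htQ 0 zero_mem_Q3 h'.symm).1 ht0
          exact div_le_div_of_nonneg_left (sq_nonneg _) (by linarith) (by linarith)
        have hle : Λpz ≤ Λ0m := integral_mono_ae (hIz 0 zero_mem_Q3) hIm hmono
        rcases hle.lt_or_eq with h' | h'
        · exact h'
        · exfalso
          have hd0 : ∫ t, (φ t ^ 2 / (w (t, 0) - m) - φ t ^ 2 / (w (t, 0) - z)) ∂μQ = 0 := by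
            rw [integral_sub hIm (hIz 0 zero_mem_Q3)]
            have e1 : ∫ t, φ t ^ 2 / (w (t, 0) - m) ∂μQ = Λ0m := rfl
            have e2 : ∫ t, φ t ^ 2 / (w (t, 0) - z) ∂μQ = Λpz := rfl
            rw [e1, e2]
            linarith
          have hnn : 0 ≤ᵐ[μQ] fun t => (φ t ^ 2 / (w (t, 0) - m) -
              φ t ^ 2 / (w (t, 0) - z)) := by
            filter_upwards [hmono] with t ht
            simpa using sub_nonneg.mpr ht
          have hae0 : (fun t => (φ t ^ 2 / (w (t, 0) - m) -
              φ t ^ 2 / (w (t, 0) - z))) =ᵐ[μQ] 0 :=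
            (integral_eq_zero_iff_of_nonneg_ae hnn
              (hIm.sub (hIz 0 zero_mem_Q3))).1 hd0
          have hφ0 : (fun t => φ t ^ 2 / (w (t, 0) - m)) =ᵐ[μQ] 0 := by
            filter_upwards [hae0, ae_mem_Q3, ae_ne_zero] with t h3 htQ ht0
            have hwm : m < w (t, 0) := by
              rcases (hmin t htQ 0 zero_mem_Q3).lt_or_eq with h' | h'
              · exact h'
              · exact absurd (huniq t htQ 0 zero_mem_Q3 h'.symm).1 ht0
            by_cases hφt : φ t = 0
            · simp [hφt]
            · exfalso
              have hpos : 0 < φ t ^ 2 := (sq_nonneg _).lt_of_ne (Ne.symm (pow_ne_zero 2 hφt))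
              have hlt2 : φ t ^ 2 / (w (t, 0) - z) < φ t ^ 2 / (w (t, 0) - m) :=
                div_lt_div_of_pos_left hpos (by linarith) (by linarith)
              have h3' : φ t ^ 2 / (w (t, 0) - m) - φ t ^ 2 / (w (t, 0) - z) = 0 := h3
              linarith
          have : Λ0m = 0 := by
            calc Λ0m = ∫ t in Q3, (0 : ℝ) := integral_congr_ae hφ0
              _ = 0 := integral_zero _ _
          linarith
      · -- p ≠ 0
        obtain ⟨ε, hε, hgap⟩ := gap w m hw hper hmin huniq p hp hp0
        have hIm : Integrable (fun t => φ t ^ 2 / (w (t, p) - m)) μQ :=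
          int_quot w hw φ hφ p m ε hε hgap
        have hmono : (fun t => φ t ^ 2 / (w (t, p) - z)) ≤ᵐ[μQ]
            (fun t => φ t ^ 2 / (w (t, p) - m)) := by
          filter_upwards [ae_mem_Q3] with t htQ
          have h1 := hgap t htQ
          exact div_le_div_of_nonneg_left (sq_nonneg _) (by linarith) (by linarith)
        calc Λpz ≤ ∫ t in Q3, φ t ^ 2 / (w (t, p) - m) :=
            integral_mono_ae (hIz p hp) hIm hmono
          _ < Λ0m := hmax p hp hp0
    exact absurd hΛeq (ne_of_lt hlt)

end FriedrichsNoEV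

/-- Under Hypotheses 1–3 with `μ_α = μ_α⁰`, the Friedrichs models `h_{μ_α⁰}(p)`, `p ∈ Q`,
have no eigenvalues below `m`. -/
theorem friedrichs_model_no_eigenvalue_below_threshold
    (u : E3 × E3 → ℝ) (m : ℝ) (U : Matrix (Fin 3) (Fin 3) ℝ) (l₁ l₂ l : ℝ) (θ : NNReal)
    (φ₁ φ₂ : E3 → ℝ)
    -- Hypothesis 1
    (hu_cont : Continuous u)
    (hu_per : ∀ (x : E3 × E3) (i : Fin 3),
      u (x.1 + (2 * π) • eV i, x.2) = u x ∧ u (x.1, x.2 + (2 * π) • eV i) = u x)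
    (hu_even : ∀ x : E3 × E3, u (-x.1, -x.2) = u x)
    (hu_smooth : ContDiff ℝ 3 u)
    (hθ : (1 / 2 : NNReal) < θ ∧ θ ≤ 1)
    (hu_holder : ∃ C : NNReal, HolderWith C θ (iteratedFDeriv ℝ 3 u))
    (hm_min : ∀ x ∈ Q3 ×ˢ Q3, m ≤ u x)
    (hm_eq : u (0, 0) = m)
    (hm_uniq : ∀ x ∈ Q3 ×ˢ Q3, u x = m → x = (0, 0))
    (hU : U.PosDef) (hl₁ : 0 < l₁) (hl₂ : 0 < l₂) (hl : l ≠ 0)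
    (hnd : ∀ v : E3 × E3, v ≠ 0 → 0 < fderiv ℝ (fderiv ℝ u) (0, 0) v v)
    (hHpp : ∀ i j : Fin 3,
      fderiv ℝ (fderiv ℝ u) (0, 0) (eV i, 0) (eV j, 0) = l₁ * U i j)
    (hHpq : ∀ i j : Fin 3,
      fderiv ℝ (fderiv ℝ u) (0, 0) (eV i, 0) ((0 : E3), eV j) = l * U i j)
    (hHqq : ∀ i j : Fin 3,
      fderiv ℝ (fderiv ℝ u) (0, 0) ((0 : E3), eV i) ((0 : E3), eV j) = l₂ * U i j)
    -- Hypothesis 2 for `φ₁`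
    (hφ₁_per : ∀ (p : E3) (i : Fin 3), φ₁ (p + (2 * π) • eV i) = φ₁ p)
    (hφ₁_smooth : ContDiff ℝ 2 φ₁)
    (hφ₁_parity : (∀ p, φ₁ (-p) = φ₁ p) ∨ (∀ p, φ₁ (-p) = -φ₁ p))
    -- Hypothesis 2 for `φ₂`
    (hφ₂_per : ∀ (p : E3) (i : Fin 3), φ₂ (p + (2 * π) • eV i) = φ₂ p)
    (hφ₂_smooth : ContDiff ℝ 2 φ₂)
    (hφ₂_parity : (∀ p, φ₂ (-p) = φ₂ p) ∨ (∀ p, φ₂ (-p) = -φ₂ p))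
    -- Hypothesis 3
    (hΛ₁max : ∀ p ∈ Q3, p ≠ 0 → Lam1 u φ₁ p m < Lam1 u φ₁ 0 m)
    (hΛ₁quad : ∃ c > (0 : ℝ), ∃ δ > (0 : ℝ), ∀ p : E3, 0 < ‖p‖ → ‖p‖ < δ →
      c * ‖p‖ ^ 2 < Lam1 u φ₁ 0 m - Lam1 u φ₁ p m)
    (hΛ₂max : ∀ p ∈ Q3, p ≠ 0 → Lam2 u φ₂ p m < Lam2 u φ₂ 0 m)
    (hΛ₂quad : ∃ c > (0 : ℝ), ∃ δ > (0 : ℝ), ∀ p : E3, 0 < ‖p‖ → ‖p‖ < δ →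
      c * ‖p‖ ^ 2 < Lam2 u φ₂ 0 m - Lam2 u φ₂ p m)
    -- `μ_α = μ_α⁰`
    (μ₁ μ₂ : ℝ) (hμ₁pos : 0 < μ₁) (hμ₂pos : 0 < μ₂)
    (hμ₁ : μ₁ = (Lam1 u φ₁ 0 m)⁻¹) (hμ₂ : μ₂ = (Lam2 u φ₂ 0 m)⁻¹)
    :
    (∀ p ∈ Q3, ∀ h : Lc →L[ℂ] Lc,
      (∀ f : Lc, (h f : E3 → ℂ) =ᵐ[μQ] fun q =>
        (u (q, p) : ℂ) * f q - (μ₁ : ℂ) * (φ₁ q : ℂ) * ∫ t in Q3, (φ₁ t : ℂ) * f t) →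
      ∀ z : ℝ, z < m → ¬ ∃ f : Lc, f ≠ 0 ∧ h f = (z : ℂ) • f) ∧
    (∀ p ∈ Q3, ∀ h : Lc →L[ℂ] Lc,
      (∀ f : Lc, (h f : E3 → ℂ) =ᵐ[μQ] fun q =>
        (u (p, q) : ℂ) * f q - (μ₂ : ℂ) * (φ₂ q : ℂ) * ∫ t in Q3, (φ₂ t : ℂ) * f t) →
      ∀ z : ℝ, z < m → ¬ ∃ f : Lc, f ≠ 0 ∧ h f = (z : ℂ) • f) := by
  
  constructor
  · exact FriedrichsNoEV.key u φ₁ m hu_cont hφ₁_smooth.continuous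
      (fun x p i => (hu_per (x, p) i).1)
      (fun t ht p hp => hm_min (t, p) (Set.mem_prod.2 ⟨ht, hp⟩))
      (fun t ht p hp he => by
        have h2 := hm_uniq (t, p) (Set.mem_prod.2 ⟨ht, hp⟩) he
        exact ⟨congrArg Prod.fst h2, congrArg Prod.snd h2⟩)
      hΛ₁max μ₁ hμ₁pos hμ₁
  · exact FriedrichsNoEV.key (fun x => u (x.2, x.1)) φ₂ m
      (hu_cont.comp (continuous_snd.prodMk continuous_fst))
      hφ₂_smooth.continuous
      (fun x p i => (hu_per (p, x) i).2)
      (fun t ht p hp => hm_min (p, t) (Set.mem_prod.2 ⟨hp, ht⟩))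
      (fun t ht p hp he => by
        have h2 := hm_uniq (p, t) (Set.mem_prod.2 ⟨hp, ht⟩) he
        exact ⟨congrArg Prod.snd h2, congrArg Prod.fst h2⟩)
      hΛ₂max μ₂ hμ₂pos hμ₂
end
end

section
/- Let 𝓗 be a complex Hilbert space, m ∈ ℝ, and let A₀ : (−∞, m) → B(𝓗) and A₁ : (−∞, m] → B(𝓗) be families of compact self-adjoint operators such that z ↦ A₀(z) is norm-continuous on (−∞, m) and z ↦ A₁(z) is norm-continuous on (−∞, m]. Let f : (−∞, m) → (0, ∞) satisfy f(z) → 0 as z → m⁻, and let l : (0, ∞) → ℝ be continuous. Assume that for every λ > 0 one has f(z) · n(λ, A₀(z)) → l(λ) as z → m⁻. Then for every λ > 0, f(z) · n(λ, A₀(z) + A₁(z)) → l(λ) as z → m⁻. -/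
open MeasureTheory Real Filter Topology

noncomputable section

/-- `n(λ, B)`: the supremum of `dim F` over finite-dimensional subspaces `F` such that
`⟨Bf, f⟩ > λ ‖f‖²` for every nonzero `f ∈ F`. -/
def ncount {H : Type*} [NormedAddCommGroup H] [InnerProductSpace ℂ H]
    (lam : ℝ) (B : H →L[ℂ] H) : ℕ :=
  sSup {k : ℕ | ∃ F : Submodule ℂ H, Module.finrank ℂ F = k ∧
    ∀ f ∈ F, f ≠ 0 → lam * ‖f‖ ^ 2 < (inner ℂ (B f) f : ℂ).re}

section aux

variable {H : Type*} [NormedAddCommGroup H] [InnerProductSpace ℂ H] [CompleteSpace H]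

lemma re_inner_le_of_norm_sub_le {S T : H →L[ℂ] H} {ε : ℝ} (h : ‖S - T‖ ≤ ε) (f : H) :
    (inner ℂ (S f) f : ℂ).re ≤ (inner ℂ (T f) f : ℂ).re + ε * ‖f‖ ^ 2 := by
  have h1 : (inner ℂ (S f) f : ℂ).re - (inner ℂ (T f) f : ℂ).re = (inner ℂ ((S - T) f) f : ℂ).re := by
    rw [ContinuousLinearMap.sub_apply, inner_sub_left]
    simp
  have h2 : (inner ℂ ((S - T) f) f : ℂ).re ≤ ‖(S - T) f‖ * ‖f‖ := by
    calc (inner ℂ ((S - T) f) f : ℂ).re ≤ ‖(inner ℂ ((S - T) f) f : ℂ)‖ := Complex.re_le_norm _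
      _ ≤ ‖(S - T) f‖ * ‖f‖ := norm_inner_le_norm _ _
  have h3 : ‖(S - T) f‖ ≤ ε * ‖f‖ := by
    calc ‖(S - T) f‖ ≤ ‖S - T‖ * ‖f‖ := (S - T).le_opNorm f
      _ ≤ ε * ‖f‖ := by gcongr
  have h4 : ‖(S - T) f‖ * ‖f‖ ≤ (ε * ‖f‖) * ‖f‖ :=
    mul_le_mul_of_nonneg_right h3 (norm_nonneg f)
  have h5 : (ε * ‖f‖) * ‖f‖ = ε * ‖f‖ ^ 2 := by ring
  linarith

/-- For a compact operator `T` and `μ > 0` there is a finite dimensional subspace `V`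
such that the Rayleigh quotient of `T` is at most `μ` on `Vᗮ`. -/
lemma exists_findim_orth (T : H →L[ℂ] H) (hT : IsCompactOperator T) {μ : ℝ} (hμ : 0 < μ) :
    ∃ V : Submodule ℂ H, FiniteDimensional ℂ V ∧
      ∀ f ∈ Vᗮ, (inner ℂ (T f) f : ℂ).re ≤ μ * ‖f‖ ^ 2 := by
  obtain ⟨K, hK, hKmem⟩ := hT
  obtain ⟨r, hr, hball⟩ := Metric.mem_nhds_iff.mp hKmem
  obtain ⟨t, -, htfin, htcover⟩ := hK.finite_cover_balls (show 0 < μ * (r / 4) by positivity)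
  refine ⟨Submodule.span ℂ t, FiniteDimensional.span_of_finite ℂ htfin, ?_⟩
  intro f hf
  rcases eq_or_ne f 0 with rfl | hf0
  · simp
  · have hnf : (0 : ℝ) < ‖f‖ := norm_pos_iff.mpr hf0
    set c : ℂ := (((r / 4) * ‖f‖⁻¹ : ℝ) : ℂ) with hc
    have hcpos : (0 : ℝ) < (r / 4) * ‖f‖⁻¹ := by positivity
    have hcne : c ≠ 0 := by
      simp only [hc, ne_eq, Complex.ofReal_eq_zero]
      exact ne_of_gt hcpos
    have hnc : ‖c‖ = (r / 4) * ‖f‖⁻¹ := by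
      rw [hc, Complex.norm_real]
      exact Real.norm_of_nonneg hcpos.le
    have hg : ‖c • f‖ < r := by
      rw [norm_smul, hnc]
      have h1 : (r / 4) * ‖f‖⁻¹ * ‖f‖ = r / 4 := by field_simp
      rw [h1]
      linarith
    have hTg : T (c • f) ∈ K := by
      apply hball
      rw [Metric.mem_ball, dist_zero_right]
      exact hg
    have := htcover hTg
    simp only [Set.mem_iUnion] at this
    obtain ⟨y, hyt, hy⟩ := this
    rw [Metric.mem_ball, dist_eq_norm] at hy
    have key : ‖T f - c⁻¹ • y‖ ≤ μ * ‖f‖ := by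
      have hTf : T f = c⁻¹ • T (c • f) := by
        rw [_root_.map_smul, smul_smul, inv_mul_cancel₀ hcne, one_smul]
      rw [hTf, ← smul_sub, norm_smul, norm_inv, hnc]
      have h1 : ((r / 4) * ‖f‖⁻¹)⁻¹ * (μ * (r / 4)) = μ * ‖f‖ := by
        field_simp
      calc ((r / 4) * ‖f‖⁻¹)⁻¹ * ‖T (c • f) - y‖
          ≤ ((r / 4) * ‖f‖⁻¹)⁻¹ * (μ * (r / 4)) := by
            apply mul_le_mul_of_nonneg_left hy.le
            positivity
        _ = μ * ‖f‖ := h1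
    have hyV : c⁻¹ • y ∈ Submodule.span ℂ t :=
      Submodule.smul_mem _ _ (Submodule.subset_span hyt)
    have hzero : (inner ℂ (c⁻¹ • y) f : ℂ) = 0 :=
      (Submodule.mem_orthogonal _ f).mp hf _ hyV
    calc (inner ℂ (T f) f : ℂ).re = (inner ℂ (T f - c⁻¹ • y) f : ℂ).re := by
          rw [inner_sub_left, hzero]; simp
      _ ≤ ‖(inner ℂ (T f - c⁻¹ • y) f : ℂ)‖ := Complex.re_le_norm _
      _ ≤ ‖T f - c⁻¹ • y‖ * ‖f‖ := norm_inner_le_norm _ _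
      _ ≤ (μ * ‖f‖) * ‖f‖ := mul_le_mul_of_nonneg_right key (norm_nonneg f)
      _ = μ * ‖f‖ ^ 2 := by ring

lemma ncount_set_bound (A : H →L[ℂ] H) (lam : ℝ) (V : Submodule ℂ H) [FiniteDimensional ℂ V]
    (hV : ∀ f ∈ Vᗮ, (inner ℂ (A f) f : ℂ).re ≤ lam * ‖f‖ ^ 2) :
    ∀ k ∈ {k : ℕ | ∃ F : Submodule ℂ H, Module.finrank ℂ F = k ∧
      ∀ f ∈ F, f ≠ 0 → lam * ‖f‖ ^ 2 < (inner ℂ (A f) f : ℂ).re}, k ≤ Module.finrank ℂ V := by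
  rintro k ⟨F, rfl, hF⟩
  haveI : CompleteSpace V := FiniteDimensional.complete ℂ V
  let φ : F →ₗ[ℂ] V := (Submodule.orthogonalProjectionOnto V).toLinearMap.comp F.subtype
  have hker : ∀ x : F, φ x = 0 → x = 0 := by
    intro x hx
    have hmem : (x : H) ∈ Vᗮ := Submodule.orthogonalProjectionOnto_eq_zero_iff.mp hx
    by_contra hne
    have hxne : (x : H) ≠ 0 := fun h => hne (Subtype.ext h)
    exact absurd (hF x x.2 hxne) (not_lt.mpr (hV x hmem))
  have hinj : Function.Injective φ := by
    intro x y hxy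
    have h0 : φ (x - y) = 0 := by rw [map_sub, hxy, sub_self]
    have := hker _ h0
    exact sub_eq_zero.mp this
  haveI : FiniteDimensional ℂ F := FiniteDimensional.of_injective φ hinj
  exact LinearMap.finrank_le_finrank_of_injective hinj

lemma ncount_le_ncount_add (B A : H →L[ℂ] H) (lam lam' : ℝ) (V : Submodule ℂ H)
    [FiniteDimensional ℂ V]
    (himp : ∀ f ∈ Vᗮ, f ≠ 0 → lam * ‖f‖ ^ 2 < (inner ℂ (B f) f : ℂ).re →
      lam' * ‖f‖ ^ 2 < (inner ℂ (A f) f : ℂ).re)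
    (hbdd : BddAbove {k : ℕ | ∃ F : Submodule ℂ H, Module.finrank ℂ F = k ∧
      ∀ f ∈ F, f ≠ 0 → lam' * ‖f‖ ^ 2 < (inner ℂ (A f) f : ℂ).re}) :
    ncount lam B ≤ ncount lam' A + Module.finrank ℂ V := by
  unfold ncount
  apply csSup_le
  · exact ⟨0, ⊥, finrank_bot ℂ H, fun f hf hne =>
      absurd ((Submodule.mem_bot ℂ).mp hf) hne⟩
  rintro k ⟨F, rfl, hF⟩
  by_cases hFD : FiniteDimensional ℂ F
  · haveI : CompleteSpace V := FiniteDimensional.complete ℂ V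
    set G := F ⊓ Vᗮ with hGdef
    have hGw : Module.finrank ℂ G ∈ {k : ℕ | ∃ F' : Submodule ℂ H, Module.finrank ℂ F' = k ∧
        ∀ f ∈ F', f ≠ 0 → lam' * ‖f‖ ^ 2 < (inner ℂ (A f) f : ℂ).re} := by
      refine ⟨G, rfl, ?_⟩
      intro f hf hne
      exact himp f hf.2 hne (hF f hf.1 hne)
    have h1 : Module.finrank ℂ G ≤ sSup {k : ℕ | ∃ F' : Submodule ℂ H,
        Module.finrank ℂ F' = k ∧
        ∀ f ∈ F', f ≠ 0 → lam' * ‖f‖ ^ 2 < (inner ℂ (A f) f : ℂ).re} :=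
      le_csSup hbdd hGw
    let φ : F →ₗ[ℂ] V := (Submodule.orthogonalProjectionOnto V).toLinearMap.comp F.subtype
    have hker : LinearMap.ker φ = Submodule.comap F.subtype G := by
      ext x
      simp only [LinearMap.mem_ker, Submodule.mem_comap, hGdef, Submodule.mem_inf,
        φ, LinearMap.coe_comp, Function.comp_apply, Submodule.coe_subtype,
        ContinuousLinearMap.coe_coe]
      constructor
      · intro h
        exact ⟨x.2, Submodule.orthogonalProjectionOnto_eq_zero_iff.mp h⟩
      · intro h
        exact Submodule.orthogonalProjectionOnto_eq_zero_iff.mpr h.2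
    have h2 : Module.finrank ℂ (LinearMap.range φ) + Module.finrank ℂ (LinearMap.ker φ)
        = Module.finrank ℂ F := LinearMap.finrank_range_add_finrank_ker φ
    have h3 : Module.finrank ℂ (LinearMap.ker φ) = Module.finrank ℂ G := by
      rw [hker]
      exact (Submodule.comapSubtypeEquivOfLe inf_le_left).finrank_eq
    have h4 : Module.finrank ℂ (LinearMap.range φ) ≤ Module.finrank ℂ V :=
      Submodule.finrank_le _
    omega
  · rw [Module.finrank_of_not_finite hFD]
    exact Nat.zero_le _

end aux

/-- Compact perturbations continuous up to the threshold do not change the asymptotics of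
the counting function `n(λ, ·)`. -/
theorem counting_function_asymptotics_stable_under_compact_perturbation
    {H : Type*} [NormedAddCommGroup H] [InnerProductSpace ℂ H] [CompleteSpace H]
    (m : ℝ) (A₀ A₁ : ℝ → H →L[ℂ] H)
    (h₀cpt : ∀ z < m, IsCompactOperator (A₀ z))
    (h₀sa : ∀ z < m, IsSelfAdjoint (A₀ z))
    (h₁cpt : ∀ z ≤ m, IsCompactOperator (A₁ z))
    (h₁sa : ∀ z ≤ m, IsSelfAdjoint (A₁ z))
    (h₀cont : ContinuousOn A₀ (Set.Iio m))
    (h₁cont : ContinuousOn A₁ (Set.Iic m))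
    (f : ℝ → ℝ) (hfpos : ∀ z < m, 0 < f z)
    (hf0 : Tendsto f (𝓝[<] m) (𝓝 0))
    (l : ℝ → ℝ) (hl : ContinuousOn l (Set.Ioi 0))
    (hlim : ∀ lam > (0 : ℝ),
      Tendsto (fun z => f z * (ncount lam (A₀ z) : ℝ)) (𝓝[<] m) (𝓝 (l lam))) :
    ∀ lam > (0 : ℝ),
      Tendsto (fun z => f z * (ncount lam (A₀ z + A₁ z) : ℝ)) (𝓝[<] m) (𝓝 (l lam)) := by
  intro lam hlam
  rw [Metric.tendsto_nhds]
  intro δ hδ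
  have hlw : Tendsto l (𝓝[Set.Ioi 0] lam) (𝓝 (l lam)) := hl lam hlam
  rw [Metric.tendsto_nhdsWithin_nhds] at hlw
  obtain ⟨η, hη, hηl⟩ := hlw (δ / 2) (by linarith)
  set ε := min (η / 3) (lam / 4) with hεdef
  have hεpos : 0 < ε := lt_min (by linarith) (by linarith)
  have hεη : 2 * ε < η := by
    have := min_le_left (η / 3) (lam / 4)
    calc 2 * ε ≤ 2 * (η / 3) := by linarith
      _ < η := by linarith
  have hεlam : 2 * ε < lam := by
    have := min_le_right (η / 3) (lam / 4)
    calc 2 * ε ≤ 2 * (lam / 4) := by linarith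
      _ < lam := by linarith
  have hl1 : |l (lam - 2 * ε) - l lam| < δ / 2 := by
    have h := hηl (show lam - 2 * ε ∈ Set.Ioi (0 : ℝ) by simp; linarith)
      (show dist (lam - 2 * ε) lam < η by
        rw [Real.dist_eq]
        have : lam - 2 * ε - lam = -(2 * ε) := by ring
        rw [this, abs_neg, abs_of_pos (by linarith)]
        linarith)
    rwa [Real.dist_eq] at h
  have hl2 : |l (lam + 2 * ε) - l lam| < δ / 2 := by
    have h := hηl (show lam + 2 * ε ∈ Set.Ioi (0 : ℝ) by simp; linarith)
      (show dist (lam + 2 * ε) lam < η by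
        rw [Real.dist_eq]
        have : lam + 2 * ε - lam = 2 * ε := by ring
        rw [this, abs_of_pos (by linarith)]
        linarith)
    rwa [Real.dist_eq] at h
  -- subspaces controlling `A₁ m` and `-(A₁ m)`
  have hA1m : IsCompactOperator (A₁ m) := h₁cpt m le_rfl
  obtain ⟨V₁, hV₁fd, hV₁⟩ := exists_findim_orth (A₁ m) hA1m hεpos
  obtain ⟨V₂, hV₂fd, hV₂⟩ := exists_findim_orth (-(A₁ m))
    (by simpa using hA1m.neg) hεpos
  haveI := hV₁fd; haveI := hV₂fd
  -- events
  have hE1 : ∀ᶠ z in 𝓝[<] m, ‖A₁ z - A₁ m‖ ≤ ε := by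
    have ht : Tendsto A₁ (𝓝[<] m) (𝓝 (A₁ m)) :=
      (h₁cont m Set.self_mem_Iic).mono_left (nhdsWithin_mono m Set.Iio_subset_Iic_self)
    filter_upwards [Metric.tendsto_nhds.mp ht ε hεpos] with z hz
    rw [dist_eq_norm] at hz
    exact hz.le
  have hE2 : ∀ᶠ z in 𝓝[<] m,
      f z * (ncount (lam - 2 * ε) (A₀ z) : ℝ) + f z * (Module.finrank ℂ V₁ : ℝ)
        < l lam + δ := by
    have htend : Tendsto (fun z => f z * (ncount (lam - 2 * ε) (A₀ z) : ℝ)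
        + f z * (Module.finrank ℂ V₁ : ℝ)) (𝓝[<] m)
        (𝓝 (l (lam - 2 * ε) + 0 * (Module.finrank ℂ V₁ : ℝ))) :=
      (hlim _ (by linarith)).add (hf0.mul_const _)
    apply htend.eventually_lt_const
    have := abs_lt.mp hl1
    rw [zero_mul, add_zero]
    linarith [this.1, this.2]
  have hE3 : ∀ᶠ z in 𝓝[<] m,
      l lam - δ < f z * (ncount (lam + 2 * ε) (A₀ z) : ℝ)
        - f z * (Module.finrank ℂ V₂ : ℝ) := by
    have htend : Tendsto (fun z => f z * (ncount (lam + 2 * ε) (A₀ z) : ℝ)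
        - f z * (Module.finrank ℂ V₂ : ℝ)) (𝓝[<] m)
        (𝓝 (l (lam + 2 * ε) - 0 * (Module.finrank ℂ V₂ : ℝ))) :=
      (hlim _ (by linarith)).sub (hf0.mul_const _)
    apply htend.eventually_const_lt
    have := abs_lt.mp hl2
    rw [zero_mul, sub_zero]
    linarith [this.1, this.2]
  have hE0 : ∀ᶠ z in 𝓝[<] m, z ∈ Set.Iio m := eventually_mem_nhdsWithin
  filter_upwards [hE0, hE1, hE2, hE3] with z hzmem hz1 hz2 hz3
  have hzm : z < m := hzmem
  have hfz : 0 < f z := hfpos z hzm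
  -- upper bound claim
  obtain ⟨W, hWfd, hW⟩ := exists_findim_orth (A₀ z) (h₀cpt z hzm)
    (show (0 : ℝ) < lam - 2 * ε by linarith)
  haveI := hWfd
  have hbddA : BddAbove {k : ℕ | ∃ F : Submodule ℂ H, Module.finrank ℂ F = k ∧
      ∀ g ∈ F, g ≠ 0 → (lam - 2 * ε) * ‖g‖ ^ 2 < (inner ℂ (A₀ z g) g : ℂ).re} :=
    ⟨Module.finrank ℂ W, fun k hk => ncount_set_bound (A₀ z) _ W hW k hk⟩
  have claimU : ncount lam (A₀ z + A₁ z) ≤ ncount (lam - 2 * ε) (A₀ z)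
      + Module.finrank ℂ V₁ := by
    apply ncount_le_ncount_add _ _ _ _ V₁ ?_ hbddA
    intro g hg hgne hlt
    have e1 : (inner ℂ ((A₀ z + A₁ z) g) g : ℂ).re
        = (inner ℂ (A₀ z g) g : ℂ).re + (inner ℂ (A₁ z g) g : ℂ).re := by
      rw [ContinuousLinearMap.add_apply, inner_add_left]
      simp
    have e2 := re_inner_le_of_norm_sub_le hz1 g
    have e3 := hV₁ g hg
    rw [e1] at hlt
    have expand : (lam - 2 * ε) * ‖g‖ ^ 2 = lam * ‖g‖ ^ 2 - 2 * (ε * ‖g‖ ^ 2) := by ring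
    rw [expand]
    linarith
  -- lower bound claim
  have hsumcpt : IsCompactOperator ⇑(A₀ z + A₁ z) := by
    have := (h₀cpt z hzm).add (h₁cpt z hzm.le)
    simpa using this
  obtain ⟨W', hW'fd, hW'⟩ := exists_findim_orth (A₀ z + A₁ z) hsumcpt hlam
  haveI := hW'fd
  have hbddB : BddAbove {k : ℕ | ∃ F : Submodule ℂ H, Module.finrank ℂ F = k ∧
      ∀ g ∈ F, g ≠ 0 → lam * ‖g‖ ^ 2 < (inner ℂ ((A₀ z + A₁ z) g) g : ℂ).re} :=
    ⟨Module.finrank ℂ W', fun k hk => ncount_set_bound (A₀ z + A₁ z) _ W' hW' k hk⟩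
  have claimL : ncount (lam + 2 * ε) (A₀ z) ≤ ncount lam (A₀ z + A₁ z)
      + Module.finrank ℂ V₂ := by
    apply ncount_le_ncount_add _ _ _ _ V₂ ?_ hbddB
    intro g hg hgne hlt
    have e1 : (inner ℂ ((A₀ z + A₁ z) g) g : ℂ).re
        = (inner ℂ (A₀ z g) g : ℂ).re + (inner ℂ (A₁ z g) g : ℂ).re := by
      rw [ContinuousLinearMap.add_apply, inner_add_left]
      simp
    have e2 : (inner ℂ (A₁ m g) g : ℂ).re ≤ (inner ℂ (A₁ z g) g : ℂ).re + ε * ‖g‖ ^ 2 :=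
      re_inner_le_of_norm_sub_le (by rwa [norm_sub_rev] at hz1) g
    have e3 : -(inner ℂ (A₁ m g) g : ℂ).re ≤ ε * ‖g‖ ^ 2 := by
      have := hV₂ g hg
      simpa [inner_neg_left] using this
    rw [e1]
    have expand : (lam + 2 * ε) * ‖g‖ ^ 2 = lam * ‖g‖ ^ 2 + 2 * (ε * ‖g‖ ^ 2) := by ring
    rw [expand] at hlt
    linarith
  -- numerics
  have hcast1 : (ncount lam (A₀ z + A₁ z) : ℝ)
      ≤ (ncount (lam - 2 * ε) (A₀ z) : ℝ) + (Module.finrank ℂ V₁ : ℝ) := by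
    exact_mod_cast claimU
  have hcast2 : (ncount (lam + 2 * ε) (A₀ z) : ℝ)
      ≤ (ncount lam (A₀ z + A₁ z) : ℝ) + (Module.finrank ℂ V₂ : ℝ) := by
    exact_mod_cast claimL
  rw [Real.dist_eq, abs_lt]
  constructor
  · have hmul := mul_le_mul_of_nonneg_left hcast2 hfz.le
    have expand : f z * ((ncount lam (A₀ z + A₁ z) : ℝ) + (Module.finrank ℂ V₂ : ℝ))
        = f z * (ncount lam (A₀ z + A₁ z) : ℝ) + f z * (Module.finrank ℂ V₂ : ℝ) := by
      ring
    rw [expand] at hmul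
    linarith
  · have hmul := mul_le_mul_of_nonneg_left hcast1 hfz.le
    have expand : f z * ((ncount (lam - 2 * ε) (A₀ z) : ℝ) + (Module.finrank ℂ V₁ : ℝ))
        = f z * (ncount (lam - 2 * ε) (A₀ z) : ℝ) + f z * (Module.finrank ℂ V₁ : ℝ) := by
      ring
    rw [expand] at hmul
    linarith
end
end
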